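/- Let d = Σ_{i=1}^k λ_i e_i be as above (λ_i > 0, e_i mutually orthogonal projections summing to 1) and let f : ℝ₊ → ℝ₊ be nondecreasing with f(λ_i) > 0. For a finite matrix x of operators, let T₊(x) = Σ_{j ≥ i} e_i x e_j be the upper triangular part with respect to the spectral ordering of d. Then for every bounded operator x: (2/3)·‖T₊(x) f(d)‖ ≤ ‖f(d) T₊(x) + T₊(x) f(d)‖ ≤ 2·‖T₊(x) f(d)‖, where ‖·‖ is the operator norm. -/

import Mathlib

open Real MeasureTheory Set Finset Matrix
open scoped InnerProductSpace

lemma rc_eq : (@RCLike.ofReal ℂ _) = Complex.ofReal := rfl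

lemma cauchy_int {c : ℝ} (hc : 0 < c) : ∫ s in Ioi (0:ℝ), exp (-(c*s)) = 1/c := by
  have := integral_comp_mul_left_Ioi (fun x => exp (-x)) 0 hc
  simp only [mul_zero, integral_exp_neg_Ioi, neg_zero, exp_zero, smul_eq_mul, mul_one] at this
  rw [this, one_div]

lemma min_psd {k : ℕ} (a : Fin k → ℝ) (ha : Monotone a) (h0 : ∀ i, 0 ≤ a i)
    (y : Fin k → ℝ) : 0 ≤ ∑ i, ∑ j, y i * y j * a (min i j) := by
  rcases Nat.eq_zero_or_pos k with hk | hk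
  · subst hk; simp
  set G : ℕ → ℝ := fun n => if h : n = 0 then 0 else a ⟨min (n-1) (k-1), by omega⟩ with hG
  set D : ℕ → ℝ := fun n => G (n+1) - G n with hD
  have hDnn : ∀ n, 0 ≤ D n := by
    intro n
    simp only [hD, hG]
    cases n with
    | zero => simpa using h0 _
    | succ m =>
      have hle : (⟨min m (k-1), by omega⟩ : Fin k) ≤ ⟨min (m+1) (k-1), by omega⟩ := by
        simp only [Fin.le_def]; omega
      have := ha hle
      simp only [Nat.succ_ne_zero, dif_neg, Nat.add_sub_cancel, not_false_iff,
        Nat.succ_sub_one]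
      linarith
  have htel : ∀ m : Fin k, ∑ n ∈ Finset.range k, (if n ≤ (m : ℕ) then D n else 0) = a m := by
    intro m
    have h1 : ∑ n ∈ Finset.range k, (if n ≤ (m : ℕ) then D n else 0)
        = ∑ n ∈ Finset.range ((m : ℕ) + 1), D n := by
      rw [← Finset.sum_filter]
      apply Finset.sum_congr _ (fun _ _ => rfl)
      ext n; simp only [Finset.mem_filter, Finset.mem_range]
      omega
    rw [h1, Finset.sum_range_sub G]
    simp only [hG]
    have hv : m = (⟨min ((m:ℕ) + 1 - 1) (k-1), by omega⟩ : Fin k) := by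
      apply Fin.ext; simp only []; omega
    simp only [Nat.succ_ne_zero, dif_neg, not_false_iff, dif_pos, sub_zero, Nat.add_sub_cancel]
    have hmlt := m.isLt
    have hv2 : (⟨(m:ℕ) ⊓ (k-1), by omega⟩ : Fin k) = m := Fin.ext (by simp only []; omega)
    rw [hv2]
  have hmin : ∀ i j : Fin k, a (min i j)
      = ∑ n ∈ Finset.range k, (if n ≤ (i : ℕ) ∧ n ≤ (j : ℕ) then D n else 0) := by
    intro i j
    rw [← htel (min i j)]
    apply Finset.sum_congr rfl
    intro n _
    have : ((min i j : Fin k) : ℕ) = min (i : ℕ) (j : ℕ) := rfl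
    simp [this, le_min_iff]
  have swap : ∀ n, D n * (∑ i : Fin k, if n ≤ (i:ℕ) then y i else 0)^2
      = ∑ i : Fin k, ∑ j : Fin k, y i * y j * (if n ≤ (i:ℕ) ∧ n ≤ (j:ℕ) then D n else 0) := by
    intro n
    rw [sq, Finset.sum_mul_sum, Finset.mul_sum]
    refine Finset.sum_congr rfl fun i _ => ?_
    rw [Finset.mul_sum]
    refine Finset.sum_congr rfl fun j _ => ?_
    by_cases hi : n ≤ (i:ℕ) <;> by_cases hj : n ≤ (j:ℕ) <;>
      simp only [hi, hj, if_true, if_false, and_self, true_and, and_true, false_and, and_false,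
        mul_zero, zero_mul] <;> ring
  calc (0:ℝ) ≤ ∑ n ∈ Finset.range k, D n * (∑ i : Fin k, if n ≤ (i:ℕ) then y i else 0)^2 := by
        exact Finset.sum_nonneg fun n _ => mul_nonneg (hDnn n) (sq_nonneg _)
    _ = ∑ i, ∑ j, y i * y j * a (min i j) := by
        simp_rw [swap]
        rw [Finset.sum_comm]
        refine Finset.sum_congr rfl fun i _ => ?_
        rw [Finset.sum_comm]
        refine Finset.sum_congr rfl fun j _ => ?_
        rw [← Finset.mul_sum, ← hmin]

lemma R_gram {k : ℕ} (a : Fin k → ℝ) (ha : Monotone a) (hpos : ∀ i, 0 < a i) :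
    ∃ g : Fin k → Fin k → ℝ, (∀ i j, a (min i j) / (a i + a j) = ∑ p, g p i * g p j) ∧
      (∀ i, ∑ p, (g p i)^2 ≤ 1/2) := by
  set Rm : Matrix (Fin k) (Fin k) ℝ := Matrix.of fun i j => a (min i j) / (a i + a j) with hRm
  have hpsd : Rm.PosSemidef := by
    refine Matrix.PosSemidef.of_dotProduct_mulVec_nonneg ?_ ?_
    · ext i j
      simp only [Matrix.conjTranspose_apply, hRm, Matrix.of_apply, star_trivial]
      rw [min_comm, add_comm]
    · intro x
      have hstar : star x = x := by funext i; exact star_trivial _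
      rw [hstar]
      set f : Fin k → Fin k → ℝ → ℝ :=
        fun i j s => x i * x j * a (min i j) * exp (-(a i + a j) * s) with hf
      have hA : ∀ i j : Fin k, 0 < a i + a j := fun i j => add_pos (hpos i) (hpos j)
      have hint : ∀ i j : Fin k, IntegrableOn (f i j) (Ioi 0) := fun i j =>
        (exp_neg_integrableOn_Ioi 0 (hA i j)).const_mul _
      have hval : ∀ i j : Fin k, ∫ s in Ioi (0:ℝ), f i j s
          = x i * (Rm i j * x j) := by
        intro i j
        simp only [hf, neg_mul]
        rw [MeasureTheory.integral_const_mul, cauchy_int (hA i j)]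
        simp only [hRm, Matrix.of_apply]
        field_simp
      have expand : x ⬝ᵥ Rm *ᵥ x = ∑ i, ∑ j, x i * (Rm i j * x j) := by
        simp only [dotProduct, Matrix.mulVec, Finset.mul_sum]
      rw [expand]
      have swap : ∑ i, ∑ j, x i * (Rm i j * x j)
          = ∫ s in Ioi (0:ℝ), ∑ i, ∑ j, f i j s := by
        rw [MeasureTheory.integral_finset_sum _
          (fun i _ => integrable_finset_sum _ (fun j _ => hint i j))]
        refine Finset.sum_congr rfl fun i _ => ?_
        rw [MeasureTheory.integral_finset_sum _ (fun j _ => hint i j)]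
        exact Finset.sum_congr rfl fun j _ => (hval i j).symm
      rw [swap]
      refine setIntegral_nonneg measurableSet_Ioi fun s _ => ?_
      have := min_psd a ha (fun i => (hpos i).le) (fun i => x i * exp (-(a i * s)))
      refine le_of_le_of_eq this (Finset.sum_congr rfl fun i _ => Finset.sum_congr rfl fun j _ => ?_)
      simp only [hf]
      have hexp : exp (-(a i + a j) * s) = exp (-(a i * s)) * exp (-(a j * s)) := by
        rw [← Real.exp_add]; ring_nf
      rw [hexp]; ring
  obtain ⟨B, hB⟩ : ∃ B : Matrix (Fin k) (Fin k) ℝ, Rm = Bᴴ * B := by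
    open scoped MatrixOrder in
    exact ⟨CFC.sqrt Rm, by
      have h0 : (0 : Matrix (Fin k) (Fin k) ℝ) ≤ Rm := Matrix.nonneg_iff_posSemidef.mpr hpsd
      rw [← Matrix.star_eq_conjTranspose, (CFC.sqrt_nonneg Rm).isSelfAdjoint.star_eq,
        CFC.sqrt_mul_sqrt_self Rm h0]⟩
  refine ⟨fun p i => B p i, fun i j => ?_, fun i => ?_⟩
  · have h1 : Rm i j = (Bᴴ * B) i j := by rw [← hB]
    simpa [Matrix.mul_apply, Matrix.conjTranspose_apply, hRm] using h1
  · have h1 : Rm i i = (Bᴴ * B) i i := by rw [← hB]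
    simp only [Matrix.mul_apply, Matrix.conjTranspose_apply, star_trivial, hRm,
      Matrix.of_apply, min_self] at h1
    have h2 : a i / (a i + a i) = 1/2 := by
      rw [div_eq_iff (by have := hpos i; positivity : (0:ℝ) < a i + a i).ne']; ring
    calc ∑ p, (B p i)^2 = ∑ p, B p i * B p i := by simp [sq]
      _ = a i / (a i + a i) := h1.symm
      _ ≤ 1/2 := le_of_eq h2

lemma mult_bound {H : Type*} [NormedAddCommGroup H] [InnerProductSpace ℂ H] [CompleteSpace H]
    {k : ℕ} (e : Fin k → H →L[ℂ] H)
    (hproj : ∀ i, IsIdempotentElem (e i))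
    (hsa : ∀ i, ContinuousLinearMap.adjoint (e i) = e i)
    (horth : ∀ i j, i ≠ j → e i * e j = 0)
    (hsum : ∑ i, e i = 1)
    (g : Fin k → Fin k → ℝ) (c : ℝ) (hc0 : 0 ≤ c) (hc : ∀ i, ∑ p, (g p i)^2 ≤ c)
    (S : H →L[ℂ] H) :
    ‖∑ i, ∑ j, (((∑ p, g p i * g p j : ℝ)) : ℂ) • (e i * S * e j)‖ ≤ c * ‖S‖ := by
  set A : Fin k → (H →L[ℂ] H) := fun p => ∑ i, ((g p i : ℝ) : ℂ) • e i with hA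
  have einner : ∀ (i : Fin k) (v w : H), ⟪(e i) v, w⟫_ℂ = ⟪v, (e i) w⟫_ℂ := by
    intro i v w
    conv_lhs => rw [← hsa i]
    exact ContinuousLinearMap.adjoint_inner_left (e i) w v
  have eorth : ∀ (i j : Fin k) (v : H), i ≠ j → ⟪(e i) v, (e j) v⟫_ℂ = 0 := by
    intro i j v hij
    rw [einner, ← ContinuousLinearMap.mul_apply, horth i j hij]
    simp
  have hApv : ∀ p v, (A p) v = ∑ i, ((g p i : ℝ) : ℂ) • (e i) v := by
    intro p v; simp [hA, ContinuousLinearMap.sum_apply]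
  have hAinner : ∀ (p : Fin k) (v w : H), ⟪(A p) v, w⟫_ℂ = ⟪v, (A p) w⟫_ℂ := by
    intro p v w
    rw [hApv, hApv, sum_inner, inner_sum]
    refine Finset.sum_congr rfl fun i _ => ?_
    rw [inner_smul_left, inner_smul_right, einner]
    rw [Complex.conj_ofReal]
  have hAnormsq : ∀ (p : Fin k) (v : H), ‖(A p) v‖^2 = ∑ i, (g p i)^2 * ‖(e i) v‖^2 := by
    intro p v
    have h1 : (⟪(A p) v, (A p) v⟫_ℂ) = ((∑ i, ((g p i)^2 * ‖(e i) v‖^2) : ℝ) : ℂ) := by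
      rw [hApv, sum_inner]
      push_cast
      refine Finset.sum_congr rfl fun i _ => ?_
      rw [inner_smul_left, Complex.conj_ofReal, inner_sum, Finset.sum_eq_single i]
      · rw [inner_smul_right, inner_self_eq_norm_sq_to_K, rc_eq]
        push_cast
        ring
      · intro j _ hj
        rw [inner_smul_right, eorth i j v (Ne.symm hj), mul_zero]
      · intro hi; exact absurd (Finset.mem_univ i) hi
    have h2 : ((‖(A p) v‖^2 : ℝ) : ℂ) = ((∑ i, ((g p i)^2 * ‖(e i) v‖^2) : ℝ) : ℂ) := by
      rw [← h1, inner_self_eq_norm_sq_to_K, rc_eq]; push_cast; ring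
    exact_mod_cast h2
  have hdecomp : ∀ v : H, ∑ i, ‖(e i) v‖^2 = ‖v‖^2 := by
    intro v
    have h1 : ((∑ i, ‖(e i) v‖^2 : ℝ) : ℂ) = ((‖v‖^2 : ℝ) : ℂ) := by
      push_cast
      calc ∑ i, ((‖(e i) v‖ : ℂ))^2 = ∑ i, ⟪(e i) v, (e i) v⟫_ℂ := by
            refine Finset.sum_congr rfl fun i _ => ?_
            rw [inner_self_eq_norm_sq_to_K, rc_eq]
        _ = ∑ i, ⟪v, (e i) v⟫_ℂ := by
            refine Finset.sum_congr rfl fun i _ => ?_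
            rw [einner]
            congr 1
            rw [← ContinuousLinearMap.mul_apply, hproj i]
        _ = ⟪v, (∑ i, e i) v⟫_ℂ := by
            rw [← inner_sum]
            congr 1
            simp [ContinuousLinearMap.sum_apply]
        _ = ((‖v‖ : ℂ))^2 := by
            rw [hsum, ContinuousLinearMap.one_apply, inner_self_eq_norm_sq_to_K, rc_eq]
    exact_mod_cast h1
  have hAsum : ∀ v : H, ∑ p, ‖(A p) v‖^2 ≤ c * ‖v‖^2 := by
    intro v
    calc ∑ p, ‖(A p) v‖^2 = ∑ p, ∑ i, (g p i)^2 * ‖(e i) v‖^2 := by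
          exact Finset.sum_congr rfl fun p _ => hAnormsq p v
      _ = ∑ i, (∑ p, (g p i)^2) * ‖(e i) v‖^2 := by
          rw [Finset.sum_comm]
          exact Finset.sum_congr rfl fun i _ => (Finset.sum_mul _ _ _).symm
      _ ≤ ∑ i, c * ‖(e i) v‖^2 := by
          refine Finset.sum_le_sum fun i _ => ?_
          exact mul_le_mul_of_nonneg_right (hc i) (sq_nonneg _)
      _ = c * ‖v‖^2 := by rw [← Finset.mul_sum, hdecomp]
  set MS : H →L[ℂ] H := ∑ i, ∑ j, (((∑ p, g p i * g p j : ℝ)) : ℂ) • (e i * S * e j) with hMSdef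
  have hMS : MS = ∑ p, A p * S * A p := by
    rw [hMSdef]
    have hrhs : ∀ p, A p * S * A p
        = ∑ i, ∑ j, (((g p i : ℝ) : ℂ) * ((g p j : ℝ) : ℂ)) • (e i * S * e j) := by
      intro p
      rw [hA]
      simp only [Finset.sum_mul, Finset.mul_sum, Finset.smul_sum, smul_mul_assoc,
        mul_smul_comm, smul_smul, mul_assoc]
      rw [Finset.sum_comm]
      refine Finset.sum_congr rfl fun i _ => Finset.sum_congr rfl fun j _ => ?_
      rw [mul_comm (((g p j : ℝ) : ℂ)) (((g p i : ℝ) : ℂ))]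
    have hL : ∀ i j : Fin k, (((∑ p, g p i * g p j : ℝ)) : ℂ) • (e i * S * e j)
        = ∑ p, ((((g p i : ℝ) : ℂ) * ((g p j : ℝ) : ℂ)) • (e i * S * e j)) := by
      intro i j
      rw [← Finset.sum_smul]
      norm_cast
    calc ∑ i, ∑ j, (((∑ p, g p i * g p j : ℝ)) : ℂ) • (e i * S * e j)
        = ∑ i, ∑ j, ∑ p, ((((g p i : ℝ) : ℂ) * ((g p j : ℝ) : ℂ)) • (e i * S * e j)) :=
          Finset.sum_congr rfl fun i _ => Finset.sum_congr rfl fun j _ => hL i j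
      _ = ∑ i, ∑ p, ∑ j, ((((g p i : ℝ) : ℂ) * ((g p j : ℝ) : ℂ)) • (e i * S * e j)) :=
          Finset.sum_congr rfl fun i _ => Finset.sum_comm
      _ = ∑ p, ∑ i, ∑ j, ((((g p i : ℝ) : ℂ) * ((g p j : ℝ) : ℂ)) • (e i * S * e j)) :=
          Finset.sum_comm
      _ = ∑ p, A p * S * A p := Finset.sum_congr rfl fun p _ => (hrhs p).symm
  have key : ∀ v w : H, ‖(⟪w, MS v⟫_ℂ)‖ ≤ c * ‖S‖ * ‖v‖ * ‖w‖ := by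
    intro v w
    have h1 : (⟪w, MS v⟫_ℂ) = ∑ p, ⟪(A p) w, S ((A p) v)⟫_ℂ := by
      rw [hMS]
      rw [ContinuousLinearMap.sum_apply, inner_sum]
      refine Finset.sum_congr rfl fun p _ => ?_
      rw [ContinuousLinearMap.mul_apply, ContinuousLinearMap.mul_apply, ← hAinner]
    rw [h1]
    calc ‖∑ p, ⟪(A p) w, S ((A p) v)⟫_ℂ‖ ≤ ∑ p, ‖(⟪(A p) w, S ((A p) v)⟫_ℂ)‖ :=
          norm_sum_le _ _
      _ ≤ ∑ p, ‖(A p) w‖ * (‖S‖ * ‖(A p) v‖) := by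
          refine Finset.sum_le_sum fun p _ => ?_
          refine le_trans (norm_inner_le_norm _ _) ?_
          exact mul_le_mul_of_nonneg_left (S.le_opNorm _) (norm_nonneg _)
      _ = ‖S‖ * ∑ p, ‖(A p) w‖ * ‖(A p) v‖ := by
          rw [Finset.mul_sum]; refine Finset.sum_congr rfl fun p _ => by ring
      _ ≤ c * ‖S‖ * ‖v‖ * ‖w‖ := by
          have hcs := Finset.sum_mul_sq_le_sq_mul_sq Finset.univ
            (fun p => ‖(A p) w‖) (fun p => ‖(A p) v‖)
          have hb : (∑ p, ‖(A p) w‖ * ‖(A p) v‖)^2 ≤ (c * ‖w‖^2) * (c * ‖v‖^2) := by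
            refine le_trans hcs ?_
            exact mul_le_mul (hAsum w) (hAsum v)
              (Finset.sum_nonneg fun p _ => sq_nonneg _)
              (by positivity)
          have hnn : 0 ≤ ∑ p, ‖(A p) w‖ * ‖(A p) v‖ :=
            Finset.sum_nonneg fun p _ => mul_nonneg (norm_nonneg _) (norm_nonneg _)
          have hb2 : (∑ p, ‖(A p) w‖ * ‖(A p) v‖)^2 ≤ (c * ‖w‖ * ‖v‖)^2 := by
            refine le_trans hb (le_of_eq ?_); ring
          have hrn : (0:ℝ) ≤ c * ‖w‖ * ‖v‖ := by positivity
          have hsq : ∑ p, ‖(A p) w‖ * ‖(A p) v‖ ≤ c * ‖w‖ * ‖v‖ := by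
            have := Real.sqrt_le_sqrt hb2
            rwa [Real.sqrt_sq hnn, Real.sqrt_sq hrn] at this
          calc ‖S‖ * ∑ p, ‖(A p) w‖ * ‖(A p) v‖ ≤ ‖S‖ * (c * ‖w‖ * ‖v‖) :=
                mul_le_mul_of_nonneg_left hsq (norm_nonneg _)
            _ = c * ‖S‖ * ‖v‖ * ‖w‖ := by ring
  refine ContinuousLinearMap.opNorm_le_bound _ (by positivity) fun v => ?_
  rcases eq_or_ne (MS v) 0 with h0 | h0
  · rw [h0, norm_zero]; positivity
  · have := key v (MS v)
    rw [inner_self_eq_norm_sq_to_K] at this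
    simp only [norm_pow, RCLike.norm_ofReal, abs_norm] at this
    have h3 : 0 < ‖MS v‖ := norm_pos_iff.mpr h0
    have h4 : ‖MS v‖ * ‖MS v‖ ≤ (c * ‖S‖ * ‖v‖) * ‖MS v‖ := by nlinarith [this]
    exact le_of_mul_le_mul_right h4 h3


theorem stmt_16 (H : Type*) [NormedAddCommGroup H] [InnerProductSpace ℂ H]
    [CompleteSpace H] (k : ℕ) (lam : Fin k → ℝ)
    (hpos : ∀ i, 0 < lam i) (hmono : StrictMono lam)
    (e : Fin k → H →L[ℂ] H)
    (hproj : ∀ i, IsIdempotentElem (e i))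
    (hsa : ∀ i, ContinuousLinearMap.adjoint (e i) = e i)
    (horth : ∀ i j, i ≠ j → e i * e j = 0)
    (hsum : ∑ i, e i = 1)
    (f : ℝ → ℝ) (hf : MonotoneOn f (Set.Ici 0)) (hfpos : ∀ i, 0 < f (lam i))
    (F : H →L[ℂ] H) (hF : F = ∑ i, ((f (lam i) : ℂ)) • e i)
    (x : H →L[ℂ] H)
    (T : H →L[ℂ] H)
    (hT : T = ∑ i, ∑ j, if i ≤ j then e i * x * e j else 0) :
    (2 / 3) * ‖T * F‖ ≤ ‖F * T + T * F‖ ∧ ‖F * T + T * F‖ ≤ 2 * ‖T * F‖ := by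
  classical
  set a : Fin k → ℝ := fun i => f (lam i) with ha
  have hamono : Monotone a := by
    intro i j hij
    exact hf (Set.mem_Ici.mpr (hpos i).le) (Set.mem_Ici.mpr (hpos j).le)
      (hmono.monotone hij)
  have hapos : ∀ i, 0 < a i := hfpos
  obtain ⟨g, hGram, hDiag⟩ := R_gram a hamono hapos
  have he2 : ∀ i j, e i * e j = if i = j then e i else 0 := by
    intro i j; by_cases h : i = j
    · subst h; rw [if_pos rfl]; exact hproj i
    · rw [if_neg h]; exact horth i j h
  have heF : ∀ i, e i * F = (a i : ℂ) • e i := by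
    intro i
    rw [hF, Finset.mul_sum]
    have hterm : ∀ i' : Fin k, e i * ((f (lam i') : ℂ) • e i')
        = if i' = i then (a i : ℂ) • e i else 0 := by
      intro i'
      rw [mul_smul_comm, he2]
      by_cases h : i = i'
      · subst h; rw [if_pos rfl, if_pos rfl]
      · rw [if_neg h, if_neg (Ne.symm h), smul_zero]
    rw [Finset.sum_congr rfl fun i' _ => hterm i']
    rw [Finset.sum_ite_eq' Finset.univ i fun _ => (a i : ℂ) • e i]
    rw [if_pos (Finset.mem_univ i)]
  have hFe : ∀ i, F * e i = (a i : ℂ) • e i := by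
    intro i
    rw [hF, Finset.sum_mul]
    have hterm : ∀ i' : Fin k, ((f (lam i') : ℂ) • e i') * e i
        = if i' = i then (a i : ℂ) • e i else 0 := by
      intro i'
      rw [smul_mul_assoc, he2]
      by_cases h : i' = i
      · subst h; rw [if_pos rfl, if_pos rfl]
      · rw [if_neg h, if_neg h, smul_zero]
    rw [Finset.sum_congr rfl fun i' _ => hterm i']
    rw [Finset.sum_ite_eq' Finset.univ i fun _ => (a i : ℂ) • e i]
    rw [if_pos (Finset.mem_univ i)]
  have hco : ∀ i j i' j' : Fin k, e i * (e i' * x * e j') * e j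
      = if i = i' then (if j' = j then e i * x * e j else 0) else 0 := by
    intro i j i' j'
    have hassoc : e i * (e i' * x * e j') * e j = (e i * e i') * (x * (e j' * e j)) := by
      simp only [mul_assoc]
    rw [hassoc, he2, he2]
    by_cases h1 : i = i'
    · subst h1
      rw [if_pos rfl, if_pos rfl]
      by_cases h2 : j' = j
      · subst h2; rw [if_pos rfl, if_pos rfl, mul_assoc]
      · rw [if_neg h2, if_neg h2, mul_zero, mul_zero]
    · rw [if_neg h1, if_neg h1, zero_mul]
  have hTij : ∀ i j, e i * T * e j = if i ≤ j then e i * x * e j else 0 := by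
    intro i j
    rw [hT]
    have expand : e i * (∑ i', ∑ j', (if i' ≤ j' then e i' * x * e j' else 0)) * e j
        = ∑ i', ∑ j', e i * (if i' ≤ j' then e i' * x * e j' else 0) * e j := by
      rw [Finset.mul_sum, Finset.sum_mul]
      refine Finset.sum_congr rfl fun i' _ => ?_
      rw [Finset.mul_sum, Finset.sum_mul]
    rw [expand]
    have hterm : ∀ i' j' : Fin k, e i * (if i' ≤ j' then e i' * x * e j' else 0) * e j
        = if i = i' then (if j' = j then (if i' ≤ j' then e i * x * e j else 0) else 0)
          else 0 := by
      intro i' j'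
      rw [mul_ite, ite_mul, mul_zero, zero_mul, hco]
      by_cases h1 : i = i' <;> by_cases h2 : j' = j <;> by_cases h3 : i' ≤ j' <;>
        simp [h1, h2, h3]
    rw [Finset.sum_congr rfl fun i' _ => Finset.sum_congr rfl fun j' _ => hterm i' j']
    have hpull : ∀ i' : Fin k,
        (∑ j' : Fin k, if i = i'
          then (if j' = j then (if i' ≤ j' then e i * x * e j else 0) else 0) else 0)
        = if i = i'
          then (∑ j' : Fin k, if j' = j then (if i' ≤ j' then e i * x * e j else 0) else 0)
          else 0 := by
      intro i'
      by_cases h1 : i = i' <;> simp [h1]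
    rw [Finset.sum_congr rfl fun i' _ => hpull i']
    rw [Finset.sum_ite_eq Finset.univ i, if_pos (Finset.mem_univ i)]
    rw [Finset.sum_ite_eq' Finset.univ j, if_pos (Finset.mem_univ j)]
  have hiDj : ∀ i j, e i * (F * T + T * F) * e j
      = if i ≤ j then (((a i + a j : ℝ)) : ℂ) • (e i * x * e j) else 0 := by
    intro i j
    have h1 : e i * (F * T) * e j = (a i : ℂ) • (e i * T * e j) := by
      have : e i * (F * T) = (e i * F) * T := by rw [mul_assoc]
      rw [this, heF i, smul_mul_assoc, smul_mul_assoc]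
    have h2 : e i * (T * F) * e j = (a j : ℂ) • (e i * T * e j) := by
      have h3 : e i * (T * F) * e j = (e i * T) * (F * e j) := by
        simp only [mul_assoc]
      rw [h3, hFe j, mul_smul_comm]
    rw [mul_add, add_mul, h1, h2, hTij]
    by_cases hij : i ≤ j
    · rw [if_pos hij, if_pos hij, ← add_smul]
      congr 1
      push_cast
      ring
    · rw [if_neg hij, if_neg hij, smul_zero, smul_zero, add_zero]
  have hFT : ∑ i, ∑ j, (((∑ p, g p i * g p j : ℝ)) : ℂ) • (e i * (F * T + T * F) * e j)
      = F * T := by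
    have hterm : ∀ i j : Fin k,
        (((∑ p, g p i * g p j : ℝ)) : ℂ) • (e i * (F * T + T * F) * e j)
        = if i ≤ j then (a i : ℂ) • (e i * x * e j) else 0 := by
      intro i j
      rw [hiDj, ← hGram i j]
      by_cases hij : i ≤ j
      · rw [if_pos hij, if_pos hij, smul_smul]
        have hdiv : a (min i j) / (a i + a j) * (a i + a j) = a i := by
          rw [div_mul_cancel₀ _ (by have := hapos i; have := hapos j; positivity :
            a i + a j ≠ 0), min_eq_left hij]
        rw [← Complex.ofReal_mul, hdiv]
      · rw [if_neg hij, if_neg hij, smul_zero]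
    rw [Finset.sum_congr rfl fun i _ => Finset.sum_congr rfl fun j _ => hterm i j]
    rw [hT, Finset.mul_sum]
    refine (Finset.sum_congr rfl fun i _ => ?_)
    rw [Finset.mul_sum]
    refine (Finset.sum_congr rfl fun j _ => ?_)
    rw [mul_ite, mul_zero]
    by_cases hij : i ≤ j
    · rw [if_pos hij, if_pos hij]
      have : F * (e i * x * e j) = (F * e i) * x * e j := by simp only [mul_assoc]
      rw [this, hFe i, smul_mul_assoc, smul_mul_assoc]
    · rw [if_neg hij, if_neg hij]
  have hb := mult_bound e hproj hsa horth hsum g (1/2) (by norm_num)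
    (fun i => hDiag i) (F * T + T * F)
  rw [hFT] at hb
  have h1 : ‖F * T + T * F‖ ≤ ‖F * T‖ + ‖T * F‖ := norm_add_le _ _
  have h2 : ‖T * F‖ ≤ ‖F * T + T * F‖ + ‖F * T‖ := by
    have h3 : ‖T * F‖ = ‖(F * T + T * F) - F * T‖ := by rw [add_sub_cancel_left]
    rw [h3]
    exact norm_sub_le _ _
  constructor
  · linarith
  · linarith
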